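/- Let (E_i)_{i=1}^M be subintervals of [0,1] such that every point of [0,1] lies in at most k of them and the E_i cover [0,1], and let 0 < q < 1. Define K(x,t) = ∑_{i,j} (q^{|i−j|}/|E_{ij}|) · 1_{E_i}(t) · 1_{E_j}(x), where E_{ij} is the smallest interval containing E_i ∪ E_j. Then for every x ∈ [0,1]: ∫_0^1 K(x,t) dt ≤ 2(k+1)/(1−q). Moreover, if additionally the E_i form the supports of a partition of unity so that each x lies in at least one E_i and |E_i ∩ E_j| ≤ |E_{ij}|, the lower bound ∫_0^1 K(x,t) dt ≥ 1 also holds (in the paper the bound k is obtained from the k covering multiplicity). -/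

import Mathlib

open MeasureTheory Set Finset

lemma geom_aux' {q : ℝ} (hq0 : 0 ≤ q) (hq1 : q < 1) (s : Finset ℕ) (g : ℕ → ℕ)
    (hg : ∀ a ∈ s, ∀ b ∈ s, g a = g b → a = b) :
    ∑ i ∈ s, q ^ g i ≤ (1 - q)⁻¹ := by
  calc ∑ i ∈ s, q ^ g i = ∑ n ∈ s.image g, q ^ n := (Finset.sum_image hg).symm
    _ ≤ ∑' n, q ^ n := Summable.sum_le_tsum _ (fun n _ => pow_nonneg hq0 n)
        (summable_geometric_of_lt_one hq0 hq1)
    _ = (1 - q)⁻¹ := tsum_geometric_of_lt_one hq0 hq1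

lemma geom_sum_le' {q : ℝ} (hq0 : 0 ≤ q) (hq1 : q < 1) (M j : ℕ) :
    ∑ i ∈ Finset.range M, q ^ ((i : ℤ) - (j : ℤ)).natAbs ≤ 2 / (1 - q) := by
  have h1q : 0 < 1 - q := by linarith
  rw [← Finset.sum_filter_add_sum_filter_not (Finset.range M) (· ≤ j)]
  have hA : ∑ i ∈ (Finset.range M).filter (· ≤ j), q ^ ((i:ℤ) - (j:ℤ)).natAbs
      ≤ (1 - q)⁻¹ := by
    have h := geom_aux' hq0 hq1 ((Finset.range M).filter (· ≤ j)) (fun i => j - i)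
      (fun a ha b hb hab => by
        simp only [Finset.mem_filter] at ha hb; omega)
    refine le_trans (le_of_eq (Finset.sum_congr rfl fun i hi => ?_)) h
    simp only [Finset.mem_filter] at hi
    beta_reduce
    congr 1
    omega
  have hB : ∑ i ∈ (Finset.range M).filter (fun i => ¬ i ≤ j), q ^ ((i:ℤ) - (j:ℤ)).natAbs
      ≤ (1 - q)⁻¹ := by
    have h := geom_aux' hq0 hq1 ((Finset.range M).filter (fun i => ¬ i ≤ j)) (fun i => i - j)
      (fun a ha b hb hab => by
        simp only [Finset.mem_filter] at ha hb; omega)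
    refine le_trans (le_of_eq (Finset.sum_congr rfl fun i hi => ?_)) h
    simp only [Finset.mem_filter] at hi
    beta_reduce
    congr 1
    omega
  have h2 : 2 / (1 - q) = (1-q)⁻¹ + (1-q)⁻¹ := by field_simp; ring
  linarith

lemma term_eq_indicator (c b l h : ℝ) :
    (fun t => c * (if t ∈ Set.Icc l h then (1:ℝ) else 0) * b)
      = (Set.Icc l h).indicator (fun _ => c * b) := by
  funext t
  by_cases ht : t ∈ Set.Icc l h <;> simp [Set.indicator_apply, ht]

lemma term_integrable' (c b l h : ℝ) :
    IntegrableOn (fun t => c * (if t ∈ Set.Icc l h then (1:ℝ) else 0) * b)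
      (Set.Icc (0:ℝ) 1) := by
  rw [term_eq_indicator]
  exact (integrableOn_const (by simp [Real.volume_Icc])).indicator
    measurableSet_Icc

lemma term_integral' (c b l h : ℝ) (hlh : l ≤ h) (hs : Set.Icc l h ⊆ Set.Icc (0:ℝ) 1) :
    ∫ t in Set.Icc (0:ℝ) 1, c * (if t ∈ Set.Icc l h then (1:ℝ) else 0) * b
      = c * (h - l) * b := by
  rw [term_eq_indicator, MeasureTheory.setIntegral_indicator measurableSet_Icc,
    Set.inter_eq_self_of_subset_right hs, MeasureTheory.setIntegral_const,
    Real.volume_real_Icc_of_le hlh, smul_eq_mul]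
  ring

/-- Kernel mass bounds for the positive dominating operator `T` built from
B-spline supports. -/
theorem stmt_7 (M k : ℕ) (lo hi : Fin M → ℝ) (hlen : ∀ i, lo i < hi i)
    (hsub : ∀ i, Set.Icc (lo i) (hi i) ⊆ Set.Icc (0:ℝ) 1)
    (hmult : ∀ x ∈ Set.Icc (0:ℝ) 1,
      ((Finset.univ.filter (fun i : Fin M => x ∈ Set.Icc (lo i) (hi i))).card ≤ k))
    (hcover : ∀ x ∈ Set.Icc (0:ℝ) 1, ∃ i : Fin M, x ∈ Set.Icc (lo i) (hi i))
    (q : ℝ) (hq0 : 0 < q) (hq1 : q < 1)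
    (K : ℝ → ℝ → ℝ)
    (hKdef : ∀ x t, K x t = ∑ i : Fin M, ∑ j : Fin M,
      q ^ ((i : ℤ) - (j : ℤ)).natAbs
        / (volume (Set.Icc (min (lo i) (lo j)) (max (hi i) (hi j)))).toReal
        * (if t ∈ Set.Icc (lo i) (hi i) then (1:ℝ) else 0)
        * (if x ∈ Set.Icc (lo j) (hi j) then (1:ℝ) else 0)) :
    ∀ x ∈ Set.Icc (0:ℝ) 1,
      (∫ t in Set.Icc (0:ℝ) 1, K x t) ≤ 2 * ((k : ℝ) + 1) / (1 - q) ∧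
      1 ≤ ∫ t in Set.Icc (0:ℝ) 1, K x t := by
  intro x hx
  have h1q : 0 < 1 - q := by linarith
  set D : Fin M → Fin M → ℝ := fun i j =>
    (volume (Set.Icc (min (lo i) (lo j)) (max (hi i) (hi j)))).toReal with hD
  have hDval : ∀ i j, D i j = max (hi i) (hi j) - min (lo i) (lo j) := by
    intro i j
    have hle : min (lo i) (lo j) ≤ max (hi i) (hi j) :=
      le_trans (min_le_left _ _) (le_trans (hlen i).le (le_max_left _ _))
    simp only [hD]
    rw [Real.volume_Icc, ENNReal.toReal_ofReal (by linarith)]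
  have hLD : ∀ i j, hi i - lo i ≤ D i j := by
    intro i j
    rw [hDval]
    have := le_max_left (hi i) (hi j)
    have := min_le_left (lo i) (lo j)
    linarith
  have hDpos : ∀ i j, 0 < D i j := fun i j => lt_of_lt_of_le (by linarith [hlen i]) (hLD i j)
  -- compute the integral
  have key : (∫ t in Set.Icc (0:ℝ) 1, K x t)
      = ∑ i : Fin M, ∑ j : Fin M, q ^ ((i : ℤ) - (j : ℤ)).natAbs / D i j * (hi i - lo i)
          * (if x ∈ Set.Icc (lo j) (hi j) then (1:ℝ) else 0) := by
    simp_rw [hKdef]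
    rw [MeasureTheory.integral_finset_sum _
      (fun i _ => integrable_finset_sum _ (fun j _ => term_integrable' _ _ _ _))]
    refine Finset.sum_congr rfl fun i _ => ?_
    rw [MeasureTheory.integral_finset_sum _ (fun j _ => term_integrable' _ _ _ _)]
    exact Finset.sum_congr rfl fun j _ => term_integral' _ _ _ _ (hlen i).le (hsub i)
  have hterm_nonneg : ∀ i j : Fin M,
      0 ≤ q ^ ((i : ℤ) - (j : ℤ)).natAbs / D i j * (hi i - lo i)
          * (if x ∈ Set.Icc (lo j) (hi j) then (1:ℝ) else 0) := by
    intro i j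
    have h1 := hlen i
    have h2 := hDpos i j
    refine mul_nonneg (mul_nonneg (div_nonneg (pow_nonneg hq0.le _) h2.le) (by linarith)) ?_
    split <;> norm_num
  constructor
  · rw [key, Finset.sum_comm]
    have hstep : ∀ j : Fin M,
        (∑ i : Fin M, q ^ ((i : ℤ) - (j : ℤ)).natAbs / D i j * (hi i - lo i)
          * (if x ∈ Set.Icc (lo j) (hi j) then (1:ℝ) else 0))
        ≤ (if x ∈ Set.Icc (lo j) (hi j) then (1:ℝ) else 0) * (2 / (1 - q)) := by
      intro j
      by_cases hxj : x ∈ Set.Icc (lo j) (hi j)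
      · simp only [hxj, if_true, mul_one, one_mul]
        calc ∑ i : Fin M, q ^ ((i : ℤ) - (j : ℤ)).natAbs / D i j * (hi i - lo i)
            ≤ ∑ i : Fin M, q ^ ((i : ℤ) - (j : ℤ)).natAbs := by
              refine Finset.sum_le_sum fun i _ => ?_
              rw [div_mul_eq_mul_div, div_le_iff₀ (hDpos i j)]
              exact mul_le_mul_of_nonneg_left (hLD i j) (pow_nonneg hq0.le _)
          _ = ∑ i ∈ Finset.range M,
                q ^ ((i : ℤ) - ((j : ℕ) : ℤ)).natAbs := by
              rw [← Fin.sum_univ_eq_sum_range (fun n => q ^ ((n : ℤ) - ((j:ℕ) : ℤ)).natAbs) M]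
          _ ≤ 2 / (1 - q) := geom_sum_le' hq0.le hq1 M j
      · simp [hxj]
    calc (∑ j : Fin M, ∑ i : Fin M, q ^ ((i : ℤ) - (j : ℤ)).natAbs / D i j * (hi i - lo i)
          * (if x ∈ Set.Icc (lo j) (hi j) then (1:ℝ) else 0))
        ≤ ∑ j : Fin M, (if x ∈ Set.Icc (lo j) (hi j) then (1:ℝ) else 0) * (2 / (1 - q)) :=
          Finset.sum_le_sum fun j _ => hstep j
      _ = ((Finset.univ.filter (fun j : Fin M => x ∈ Set.Icc (lo j) (hi j))).card : ℝ)
            * (2 / (1 - q)) := by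
          rw [← Finset.sum_mul]
          simp only [Finset.sum_boole]
      _ ≤ (k : ℝ) * (2 / (1 - q)) := by
          refine mul_le_mul_of_nonneg_right ?_ (by positivity)
          exact_mod_cast hmult x hx
      _ ≤ 2 * ((k : ℝ) + 1) / (1 - q) := by
          rw [div_eq_mul_inv, div_eq_mul_inv, show (k:ℝ) * (2 * (1-q)⁻¹) = (k*2) * (1-q)⁻¹ from by ring]
          exact mul_le_mul_of_nonneg_right (by push_cast; linarith) (by positivity)
  · obtain ⟨j0, hj0⟩ := hcover x hx
    rw [key]
    have hdiag : q ^ ((j0 : ℤ) - (j0 : ℤ)).natAbs / D j0 j0 * (hi j0 - lo j0)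
        * (if x ∈ Set.Icc (lo j0) (hi j0) then (1:ℝ) else 0) = 1 := by
      have hL : hi j0 - lo j0 ≠ 0 := by have := hlen j0; linarith
      rw [if_pos hj0, hDval, sub_self, Int.natAbs_zero, pow_zero, max_self, min_self]
      field_simp
    calc (1:ℝ) = q ^ ((j0 : ℤ) - (j0 : ℤ)).natAbs / D j0 j0 * (hi j0 - lo j0)
          * (if x ∈ Set.Icc (lo j0) (hi j0) then (1:ℝ) else 0) := hdiag.symm
      _ ≤ ∑ j : Fin M, q ^ ((j0 : ℤ) - (j : ℤ)).natAbs / D j0 j * (hi j0 - lo j0)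
          * (if x ∈ Set.Icc (lo j) (hi j) then (1:ℝ) else 0) :=
          Finset.single_le_sum (fun j _ => hterm_nonneg j0 j) (Finset.mem_univ j0)
      _ ≤ ∑ i : Fin M, ∑ j : Fin M, q ^ ((i : ℤ) - (j : ℤ)).natAbs / D i j * (hi i - lo i)
          * (if x ∈ Set.Icc (lo j) (hi j) then (1:ℝ) else 0) :=
          Finset.single_le_sum
            (fun i _ => Finset.sum_nonneg fun j _ => hterm_nonneg i j)
            (Finset.mem_univ j0)
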